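/- Let H be a symmetric positive definite m × m real matrix with all eigenvalues λ_1, ..., λ_m in (0, 1), let T : ℝ^m → ℝ^m be nonexpansive with a fixed point v*, and let c = min_j λ_j(1 − λ_j) > 0. Define v^{k+1} = (I − H) v^k + H T(v^k) starting from any v^1. Then for every k ≥ 1, ∑_{j=1}^k ‖v^j − T(v^j)‖²_{H^{-1}} ≤ (1/c) ‖v^1 − v*‖²_{H^{-1}}. -/

import Mathlib

/-- The weighted squared norm `‖v‖²_{H⁻¹} = vᵀ H⁻¹ v` associated with a symmetric positive
definite matrix `H`. -/
noncomputable def wnormSq {m : ℕ} (H : Matrix (Fin m) (Fin m) ℝ)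
    (v : EuclideanSpace ℝ (Fin m)) : ℝ :=
  inner ℝ v (Matrix.toEuclideanLin H⁻¹ v)

/-- Let `H` be a symmetric positive definite `m × m` real matrix with all
eigenvalues `λ_j ∈ (0,1)`, let `T` be nonexpansive with fixed point `v*`, and let
`c = min_j λ_j (1 − λ_j) > 0`.  For the iteration `v (k+1) = (I − H) v k + H T(v k)`
started from any `v 1`, one has for every `k ≥ 1`
`∑_{j=1}^k ‖v^j − T v^j‖²_{H⁻¹} ≤ (1/c) ‖v^1 − v*‖²_{H⁻¹}`. -/
theorem preconditioned_mann_residual_sum {m : ℕ}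
    (H : Matrix (Fin m) (Fin m) ℝ) (hH : H.PosDef)
    (heig : ∀ i, hH.1.eigenvalues i ∈ Set.Ioo (0:ℝ) 1)
    (T : EuclideanSpace ℝ (Fin m) → EuclideanSpace ℝ (Fin m))
    (hT : ∀ x y, ‖T x - T y‖ ≤ ‖x - y‖)
    (vstar : EuclideanSpace ℝ (Fin m)) (hfix : T vstar = vstar)
    (c : ℝ)
    (hc : IsLeast (Set.range fun j => hH.1.eigenvalues j * (1 - hH.1.eigenvalues j)) c)
    (v : ℕ → EuclideanSpace ℝ (Fin m))
    (hrec : ∀ k, 1 ≤ k → v (k + 1) =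
      (v k - Matrix.toEuclideanLin H (v k)) + Matrix.toEuclideanLin H (T (v k))) :
    ∀ k, 1 ≤ k →
      ∑ j ∈ Finset.Icc 1 k, wnormSq H (v j - T (v j)) ≤
        (1 / c) * wnormSq H (v 1 - vstar) := by
  set B := hH.1.eigenvectorBasis with hB
  set lam := hH.1.eigenvalues with hlam
  set L := Matrix.toEuclideanLin H with hL
  set Linv := Matrix.toEuclideanLin H⁻¹ with hLinv
  -- basic facts about eigenvalues
  have hlampos : ∀ i, 0 < lam i := fun i => (heig i).1
  have hcpos : 0 < c := by
    obtain ⟨i, hi⟩ := hc.1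
    have hi' : lam i * (1 - lam i) = c := hi
    have h1 := (heig i).1
    have h2 := (heig i).2
    nlinarith
  -- eigenvector action of L
  have hLB : ∀ i, L (B i) = lam i • B i := fun i => by
    apply (WithLp.equiv 2 (Fin m → ℝ)).injective
    simpa [hL] using hH.1.mulVec_eigenvectorBasis i
  have hLinvL : ∀ x, Linv (L x) = x := fun x => by
    rw [hL, hLinv, Matrix.toEuclideanLin_apply, Matrix.toEuclideanLin_apply]
    simp [Matrix.mulVec_mulVec, Matrix.nonsing_inv_mul H hH.det_pos.ne'.isUnit]
  have hLinvB : ∀ i, Linv (B i) = (lam i)⁻¹ • B i := fun i => by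
    have : L ((lam i)⁻¹ • B i) = B i := by
      rw [map_smul, hLB i, smul_smul, inv_mul_cancel₀ (hlampos i).ne', one_smul]
    conv_lhs => rw [← this]
    rw [hLinvL]
  -- symmetry
  have hsym : ∀ x y : EuclideanSpace ℝ (Fin m), (inner ℝ (L x) y : ℝ) = inner ℝ x (L y) :=
    Matrix.isHermitian_iff_isSymmetric.1 hH.1
  have hsyminv : ∀ x y : EuclideanSpace ℝ (Fin m), (inner ℝ (Linv x) y : ℝ) = inner ℝ x (Linv y) :=
    Matrix.isHermitian_iff_isSymmetric.1 hH.1.inv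
  -- coordinates
  have hinner : ∀ x y : EuclideanSpace ℝ (Fin m),
      (inner ℝ x y : ℝ) = ∑ i, B.repr x i * B.repr y i := fun x y => by
    rw [← B.repr.inner_map_map x y, PiLp.inner_apply]
    simp [RCLike.inner_apply, mul_comm]
  have hreprL : ∀ (x : EuclideanSpace ℝ (Fin m)) i,
      B.repr (L x) i = lam i * B.repr x i := fun x i => by
    rw [B.repr_apply_apply, B.repr_apply_apply, ← hsym, hLB i, real_inner_smul_left]
  have hreprLinv : ∀ (x : EuclideanSpace ℝ (Fin m)) i,
      B.repr (Linv x) i = (lam i)⁻¹ * B.repr x i := fun x i => by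
    rw [B.repr_apply_apply, B.repr_apply_apply, ← hsyminv, hLinvB i, real_inner_smul_left]
  have hwns : ∀ x : EuclideanSpace ℝ (Fin m),
      wnormSq H x = ∑ i, (lam i)⁻¹ * (B.repr x i) ^ 2 := fun x => by
    rw [wnormSq, hinner]
    exact Finset.sum_congr rfl fun i _ => by rw [hreprLinv]; ring
  have hwnonneg : ∀ x : EuclideanSpace ℝ (Fin m), 0 ≤ wnormSq H x := fun x => by
    rw [hwns]
    exact Finset.sum_nonneg fun i _ =>
      mul_nonneg (inv_nonneg.2 (hlampos i).le) (sq_nonneg _)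
  have hnormsq : ∀ x : EuclideanSpace ℝ (Fin m),
      ‖x‖ ^ 2 = ∑ i, (B.repr x i) ^ 2 := fun x => by
    rw [← real_inner_self_eq_norm_sq, hinner]
    exact Finset.sum_congr rfl fun i _ => (sq _).symm
  -- key one-step inequality
  have step : ∀ j, 1 ≤ j →
      wnormSq H (v (j + 1) - vstar) + c * wnormSq H (v j - T (v j)) ≤
        wnormSq H (v j - vstar) := by
    intro j hj
    set a := v j - vstar with ha
    set r := v j - T (v j) with hr
    have hva : v (j + 1) - vstar = a - L r := by
      rw [hrec j hj, hr, map_sub, ha]; abel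
    set p : Fin m → ℝ := fun i => B.repr a i with hp
    set q : Fin m → ℝ := fun i => B.repr r i with hq
    -- nonexpansiveness in coordinates
    have hne : ∑ i, (p i - q i) ^ 2 ≤ ∑ i, (p i) ^ 2 := by
      have har : a - r = T (v j) - vstar := by rw [ha, hr]; abel
      have h1 : ‖a - r‖ ≤ ‖a‖ := by
        rw [har, ← hfix, ha]; exact hT (v j) vstar
      have h2 : ‖a - r‖ ^ 2 ≤ ‖a‖ ^ 2 := pow_le_pow_left₀ (norm_nonneg _) h1 2
      rw [hnormsq, hnormsq] at h2
      simpa [map_sub, PiLp.sub_apply] using h2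
    have key1 : ∑ i, (q i) ^ 2 ≤ 2 * ∑ i, p i * q i := by
      have expand : ∑ i, (p i - q i) ^ 2 =
          (∑ i, (p i) ^ 2) - 2 * (∑ i, p i * q i) + ∑ i, (q i) ^ 2 := by
        rw [Finset.mul_sum, ← Finset.sum_sub_distrib, ← Finset.sum_add_distrib]
        exact Finset.sum_congr rfl fun i _ => by ring
      linarith
    have key2 : ∑ i, (lam i * (q i) ^ 2 + c * ((lam i)⁻¹ * (q i) ^ 2)) ≤
        ∑ i, (q i) ^ 2 := by
      refine Finset.sum_le_sum fun i _ => ?_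
      have hl := hlampos i
      have hcle : c ≤ lam i * (1 - lam i) := hc.2 ⟨i, rfl⟩
      have h1 : c * (lam i)⁻¹ ≤ 1 - lam i := by
        rw [← div_eq_mul_inv, div_le_iff₀ hl]
        nlinarith
      nlinarith [sq_nonneg (q i), mul_le_mul_of_nonneg_right h1 (sq_nonneg (q i))]
    -- assemble
    rw [hva, hwns, hwns, hwns]
    have hrepr : ∀ i, B.repr (a - L r) i = p i - lam i * q i := fun i => by
      simp only [map_sub, PiLp.sub_apply, hreprL, hp, hq]
    have split1 : ∑ i, (lam i)⁻¹ * (B.repr (a - L r) i) ^ 2 =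
        (∑ i, (lam i)⁻¹ * (p i) ^ 2) - 2 * (∑ i, p i * q i) + ∑ i, lam i * (q i) ^ 2 := by
      rw [Finset.mul_sum, ← Finset.sum_sub_distrib, ← Finset.sum_add_distrib]
      refine Finset.sum_congr rfl fun i _ => ?_
      rw [hrepr i]
      have hl := (hlampos i).ne'
      field_simp
      ring
    have split2 : ∑ i, (lam i * (q i) ^ 2 + c * ((lam i)⁻¹ * (q i) ^ 2)) =
        (∑ i, lam i * (q i) ^ 2) + c * ∑ i, (lam i)⁻¹ * (q i) ^ 2 := by
      rw [Finset.sum_add_distrib, Finset.mul_sum]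
    rw [split1]
    linarith [key1, key2, split2.symm.le]
  -- telescoping
  have main : ∀ k, 1 ≤ k →
      c * (∑ j ∈ Finset.Icc 1 k, wnormSq H (v j - T (v j))) +
        wnormSq H (v (k + 1) - vstar) ≤ wnormSq H (v 1 - vstar) := by
    intro k hk
    induction k, hk using Nat.le_induction with
    | base =>
      rw [Finset.Icc_self, Finset.sum_singleton]
      linarith [step 1 le_rfl]
    | succ n hn ih =>
      rw [Finset.sum_Icc_succ_top (by omega : 1 ≤ n + 1), mul_add]
      linarith [step (n + 1) (by omega)]
  intro k hk
  have h1 := main k hk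
  have h2 := hwnonneg (v (k + 1) - vstar)
  rw [one_div, inv_mul_eq_div, le_div_iff₀ hcpos]
  nlinarith
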